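/- arXiv:2412.13584 — 2 statements merged into one kernel-verified Lean document; each statement's English description precedes it below -/
import Mathlib

section
/- Suppose λ is a singular strong limit cardinal and Hajnal's lemma holds: for every two infinitely chromatic graphs G, H, every subgraph of G of size less than Chr(H) has chromatic number at most Chr(G × H). Suppose further that the compactness principle holds: for every graph G of size λ⁺ and every cardinal μ, if every subgraph of G of size less than λ has chromatic number ≤ μ, then Chr(G) ≤ μ^{cf(λ)}. Then for every two graphs G₀, G₁ of size λ⁺ with min(Chr(G₀), Chr(G₁)) ≥ λ, one has Chr(G₀ × G₁) ≥ λ. -/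
universe u

/-- The product (tensor/categorical) graph: pairs are adjacent iff both coordinates are. -/
def gprod {V W : Type u} (G : SimpleGraph V) (H : SimpleGraph W) : SimpleGraph (V × W) where
  Adj p q := G.Adj p.1 q.1 ∧ H.Adj p.2 q.2
  symm := ⟨fun _ _ h => ⟨h.1.symm, h.2.symm⟩⟩
  loopless := ⟨fun p h => G.loopless.irrefl p.1 h.1⟩

/-- The (cardinal) chromatic number: the least cardinal `μ` such that there is a good
coloring of `G` into a set of size `μ`. -/
noncomputable def Chr {V : Type u} (G : SimpleGraph V) : Cardinal.{u} :=
  sInf {μ : Cardinal.{u} | ∃ c : V → μ.ord.ToType, ∀ v w, G.Adj v w → c v ≠ c w}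

/-- If `λ` is a singular strong limit cardinal, Hajnal's lemma holds, and the
compactness principle for chromatic numbers holds at `λ⁺`, then any two graphs of size `λ⁺`
both of chromatic number at least `λ` have product of chromatic number at least `λ`. -/
theorem stmt_13 (lam : Cardinal.{u}) (hinf : Cardinal.aleph0 ≤ lam)
    (hsing : lam.ord.cof < lam)
    (hsl : ∀ μ : Cardinal.{u}, μ < lam → (2 : Cardinal.{u}) ^ μ < lam)
    (hajnal : ∀ (V W : Type u) (G : SimpleGraph V) (H : SimpleGraph W),
      Cardinal.aleph0 ≤ Chr G → Cardinal.aleph0 ≤ Chr H →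
        ∀ S : Set V, Cardinal.mk S < Chr H →
          Chr (SimpleGraph.induce S G) ≤ Chr (gprod G H))
    (hcompact : ∀ (V : Type u) (G : SimpleGraph V) (μ : Cardinal.{u}),
      Cardinal.mk V = Order.succ lam →
        (∀ S : Set V, Cardinal.mk S < lam → Chr (SimpleGraph.induce S G) ≤ μ) →
          Chr G ≤ μ ^ lam.ord.cof) :
    ∀ (V W : Type u) (G : SimpleGraph V) (H : SimpleGraph W),
      Cardinal.mk V = Order.succ lam → Cardinal.mk W = Order.succ lam →
        lam ≤ min (Chr G) (Chr H) → lam ≤ Chr (gprod G H) := by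
  intro V W G H hV hW hmin
  by_contra hlt
  push_neg at hlt
  have hG : lam ≤ Chr G := le_trans hmin (min_le_left _ _)
  have hH : lam ≤ Chr H := le_trans hmin (min_le_right _ _)
  set μ := Chr (gprod G H) with hμ
  have hGle : Chr G ≤ μ ^ lam.ord.cof := by
    apply hcompact V G μ hV
    intro S hS
    exact hajnal V W G H (hinf.trans hG) (hinf.trans hH) S (hS.trans_le hH)
  have hpow : μ ^ lam.ord.cof < lam := by
    calc μ ^ lam.ord.cof ≤ ((2 : Cardinal.{u}) ^ μ) ^ lam.ord.cof := by
          exact Cardinal.power_le_power_right (le_of_lt (Cardinal.cantor μ))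
      _ = (2 : Cardinal.{u}) ^ (μ * lam.ord.cof) := by
          rw [← Cardinal.power_mul]
      _ < lam := hsl _ (Cardinal.mul_lt_of_lt hinf hlt hsing)
  exact absurd (hG.trans hGle) (not_le.mpr hpow)
end

section
/- Define on sets of ordinals the strong inclusion x ⋐ y iff x ⊆ y and |x|⁺ < otp(|sup(x)| ∩ y) (order type of the intersection of y with the cardinal |sup x|). Then ⋐ is transitive on the class of bounded sets of ordinals under suitable cardinality hypotheses; specifically, for x, y ∈ 𝒜_α(α⁺) := {z ∈ 𝒫_α(α⁺) : α ∩ z is a regular cardinal and otp(z) = (otp(α ∩ z))⁺}, one has x ⋐ y iff x ⊆ y and (α_x)⁺⁺ < α_y, where α_z := otp(α ∩ z). -/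
universe u

/-- The order type of a set of ordinals. -/
noncomputable def otp (s : Set Ordinal.{u}) : Ordinal.{u + 1} :=
  Ordinal.type (α := ↥s) (Subrel ((· < ·) : Ordinal.{u} → Ordinal.{u} → Prop) (· ∈ s))

/-- Strong inclusion: `x ⋐ y` iff `x ⊆ y` and `|x|⁺ < otp(|sup x| ∩ y)`. -/
noncomputable def ssub (x y : Set Ordinal.{u}) : Prop :=
  x ⊆ y ∧ (Order.succ (Cardinal.mk x)).ord < otp {o ∈ y | o < ((sSup x).card).ord}

/-- `α_x`, the order type of `α ∩ x`. -/
noncomputable def alphaOf (α : Cardinal.{u}) (x : Set Ordinal.{u}) : Ordinal.{u + 1} :=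
  otp {o ∈ x | o < α.ord}

/-- Membership in `𝒜_α(α⁺)`: `x` is a subset of `α⁺` of size `< α` such that `α ∩ x` is
(of order type) a regular cardinal and `otp x = (α_x)⁺`. -/
noncomputable def memA (α : Cardinal.{u}) (x : Set Ordinal.{u}) : Prop :=
  x ⊆ Set.Iio (Order.succ α).ord ∧
    Cardinal.mk x < Cardinal.lift.{u + 1} α ∧
    ((alphaOf α x).card).ord = alphaOf α x ∧
    ((alphaOf α x).card).IsRegular ∧
    otp x = (Order.succ ((alphaOf α x).card)).ord

lemma otp_card (s : Set Ordinal.{u}) : (otp s).card = Cardinal.mk s :=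
  Ordinal.card_type _

lemma sSup_lt_of_small (o : Ordinal.{u}) (x : Set Ordinal.{u}) (hxo : x ⊆ Set.Iio o)
    (hc : Cardinal.mk x < Cardinal.lift.{u+1} o.cof) : sSup x < o := by
  classical
  let e := Ordinal.ToType.mk (o := o)
  let t : Set (Set.Iio o) := Subtype.val ⁻¹' x
  let s' : Set o.ToType := (⇑e) '' t
  have hmt : Cardinal.mk t = Cardinal.mk x :=
    Cardinal.mk_preimage_of_injective_of_subset_range _ _ Subtype.val_injective
      (by intro a ha; simpa using hxo ha)
  have hms' : Cardinal.lift.{u+1} (Cardinal.mk s') = Cardinal.mk x := by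
    have h1 := Cardinal.mk_image_eq_lift (⇑e) t (e.injective)
    rw [Cardinal.lift_id'.{u, u+1}] at h1
    rw [h1, hmt]
  have hslt : Cardinal.mk s' < o.cof := by
    rw [← Cardinal.lift_lt.{u, u+1}, hms']; exact hc
  let f : ↥s' → Ordinal.{u} := fun i => ((e.symm i.1 : Set.Iio o) : Ordinal)
  have hrange : Set.range f = x := by
    ext b
    constructor
    · rintro ⟨⟨i, a, hat, rfl⟩, rfl⟩
      simpa [f, t] using hat
    · intro hb
      exact ⟨⟨e ⟨b, hxo hb⟩, ⟨b, hxo hb⟩, hb, rfl⟩, by simp [f]⟩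
  have : sSup x = iSup f := by rw [← hrange]; rfl
  rw [this]
  exact Ordinal.iSup_lt_ord hslt fun i => (e.symm i.1).2

/-- For a regular cardinal `α` and `x, y ∈ 𝒜_α(α⁺)`, the strong inclusion
`x ⋐ y` holds iff `x ⊆ y` and `(α_x)⁺⁺ < α_y`. -/
theorem stmt_15 (α : Cardinal.{u}) (hα : α.IsRegular)
    (x y : Set Ordinal.{u}) (hx : memA α x) (hy : memA α y) :
    ssub x y ↔
      x ⊆ y ∧ (Order.succ (Order.succ ((alphaOf α x).card))).ord < alphaOf α y := by
  obtain ⟨hx1, hx2, hx3, hx4, hx5⟩ := hx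
  -- cardinality of x
  have hmkx : Cardinal.mk x = Order.succ ((alphaOf α x).card) := by
    rw [← otp_card, hx5, Cardinal.card_ord]
  -- there is an element of x that is ≥ α.ord
  have hexists : ∃ b ∈ x, α.ord ≤ b := by
    by_contra h
    push_neg at h
    have hset : {o ∈ x | o < α.ord} = x := by
      ext b; exact ⟨fun hb => hb.1, fun hb => ⟨hb, h b hb⟩⟩
    have : alphaOf α x = otp x := by rw [alphaOf, hset]
    rw [hx5] at this
    have := congrArg Ordinal.card this
    rw [Cardinal.card_ord] at this
    exact absurd this (Order.lt_succ _).ne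
  obtain ⟨b, hbx, hab⟩ := hexists
  have hbdd : BddAbove x := ⟨(Order.succ α).ord, fun c hc => (hx1 hc).le⟩
  have hle : α.ord ≤ sSup x := hab.trans (le_csSup hbdd hbx)
  have hlt : sSup x < (Order.succ α).ord := by
    apply sSup_lt_of_small _ _ hx1
    rw [(Cardinal.isRegular_succ hα.aleph0_le).cof_eq]
    exact hx2.trans (Cardinal.lift_lt.2 (Order.lt_succ α))
  have hcard : (sSup x).card = α := by
    refine le_antisymm ?_ ?_
    · exact Order.lt_succ_iff.1 (Cardinal.lt_ord.1 hlt)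
    · simpa using Ordinal.card_le_card hle
  have hsetY : {o ∈ y | o < ((sSup x).card).ord} = {o ∈ y | o < α.ord} := by
    rw [hcard]
  rw [ssub, hsetY, hmkx]
  rfl
end
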